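/- Let δ ∈ (0,1), let z₁ > 0 satisfy Φ(z₁) = 1 − δ/2, and let S be a random variable on a probability space (Ω, μ) whose law is the centered Gaussian with variance 1/4 (the asymptotic law of the Sobel statistic under H00: α = β = 0). Then the size of the Sobel test under H00 equals μ({|S| > z₁}) = 2(1 − Φ(2z₁)), and this quantity is strictly less than δ; i.e., the Sobel test is conservative under H00. -/

import Mathlib

open MeasureTheory ProbabilityTheory Set
open scoped NNReal

lemma gauss_symm (a : ℝ) :
    gaussianReal 0 1 (Iio (-a)) = gaussianReal 0 1 (Ioi a) := by
  have hv : (NNReal.mk ((-1:ℝ)^2) (sq_nonneg _) * 1 : ℝ≥0) = 1 := by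
    apply NNReal.eq; norm_num
  have h : (gaussianReal 0 1).map (fun x : ℝ => (-1 : ℝ) * x) = gaussianReal 0 1 := by
    rw [gaussianReal_map_const_mul (-1 : ℝ), hv]
    norm_num
  conv_lhs => rw [← h]
  rw [Measure.map_apply (measurable_id'.const_mul _) measurableSet_Iio]
  congr 1
  ext x
  simp [lt_neg]

lemma gauss_tail (a : ℝ) (ha : 0 ≤ a) :
    gaussianReal 0 1 {x : ℝ | a < |x|}
      = ENNReal.ofReal (2 * (1 - (gaussianReal 0 1 (Iic a)).toReal)) := by
  have hset : {x : ℝ | a < |x|} = Iio (-a) ∪ Ioi a := by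
    ext x
    simp [lt_abs, lt_neg, or_comm, mem_Iio, mem_Ioi]
  have hdisj : Disjoint (Iio (-a)) (Ioi a) := by
    rw [Set.disjoint_iff]
    rintro x ⟨h1, h2⟩
    simp only [mem_Iio, mem_Ioi] at h1 h2
    linarith
  have hcompl : gaussianReal 0 1 (Ioi a) = 1 - gaussianReal 0 1 (Iic a) := by
    rw [← compl_Iic, measure_compl measurableSet_Iic (measure_ne_top _ _), measure_univ]
  rw [hset, measure_union hdisj measurableSet_Ioi, gauss_symm, hcompl]
  have hle : gaussianReal 0 1 (Iic a) ≤ 1 := prob_le_one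
  have hne : gaussianReal 0 1 (Iic a) ≠ ⊤ := measure_ne_top _ _
  rw [← two_mul]
  rw [ENNReal.ofReal_mul (by norm_num)]
  congr 1
  · norm_num
  rw [ENNReal.ofReal_sub _ (ENNReal.toReal_nonneg), ENNReal.ofReal_one,
    ENNReal.ofReal_toReal hne]

theorem sobel_test_conservative_under_H00
    {Ω : Type*} [MeasurableSpace Ω] (μ : Measure Ω) [IsProbabilityMeasure μ]
    (δ z₁ : ℝ) (hδ : δ ∈ Ioo (0:ℝ) 1) (hz₁pos : 0 < z₁)
    (hz₁ : gaussianReal 0 1 (Iic z₁) = ENNReal.ofReal (1 - δ / 2))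
    (S : Ω → ℝ) (hS : Measurable S)
    (hlaw : Measure.map S μ = gaussianReal 0 (1/4 : ℝ≥0)) :
    μ {ω | z₁ < |S ω|} =
        ENNReal.ofReal (2 * (1 - (gaussianReal 0 1 (Iic (2 * z₁))).toReal)) ∧
      μ {ω | z₁ < |S ω|} < ENNReal.ofReal δ := by
  have hmeas : MeasurableSet {x : ℝ | z₁ < |x|} :=
    measurableSet_lt measurable_const measurable_id.abs
  -- step 1: rewrite via the law
  have h1 : μ {ω | z₁ < |S ω|} = gaussianReal 0 (1/4 : ℝ≥0) {x : ℝ | z₁ < |x|} := by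
    rw [← hlaw, Measure.map_apply hS hmeas]
    rfl
  -- step 2: scaling
  have hv : (NNReal.mk ((1/2:ℝ)^2) (sq_nonneg _) * 1 : ℝ≥0) = (1/4 : ℝ≥0) := by
    apply NNReal.eq; norm_num
  have hmap : (gaussianReal 0 1).map (fun x : ℝ => (1/2 : ℝ) * x)
      = gaussianReal 0 (1/4 : ℝ≥0) := by
    rw [gaussianReal_map_const_mul (1/2 : ℝ), hv, mul_zero]
  have h2 : gaussianReal 0 (1/4 : ℝ≥0) {x : ℝ | z₁ < |x|}
      = gaussianReal 0 1 {x : ℝ | 2 * z₁ < |x|} := by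
    rw [← hmap, Measure.map_apply (measurable_id'.const_mul _) hmeas]
    congr 1
    ext x
    simp only [mem_preimage, mem_setOf_eq, abs_mul]
    rw [abs_of_pos (by norm_num : (0:ℝ) < 1/2)]
    constructor <;> intro h <;> nlinarith [abs_nonneg x]
  have key : μ {ω | z₁ < |S ω|}
      = ENNReal.ofReal (2 * (1 - (gaussianReal 0 1 (Iic (2 * z₁))).toReal)) := by
    rw [h1, h2, gauss_tail _ (by linarith)]
  refine ⟨key, ?_⟩
  -- strict inequality
  have hqle : (1 : ℝ) - δ / 2 ≤ 1 := by linarith [hδ.1]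
  have hq : (gaussianReal 0 1 (Iic z₁)).toReal = 1 - δ / 2 := by
    rw [hz₁, ENNReal.toReal_ofReal (by linarith [hδ.2])]
  have hsplit : Iic (2 * z₁) = Iic z₁ ∪ Ioc z₁ (2 * z₁) := by
    rw [Iic_union_Ioc_eq_Iic (by linarith)]
  have hpos : 0 < gaussianReal 0 1 (Ioc z₁ (2 * z₁)) := by
    rw [pos_iff_ne_zero]
    intro h0
    have := (gaussianReal_absolutelyContinuous' 0 (one_ne_zero)) h0
    rw [Real.volume_Ioc] at this
    simp only [ENNReal.ofReal_eq_zero] at this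
    linarith
  have hdisj2 : Disjoint (Iic z₁) (Ioc z₁ (2 * z₁)) := by
    rw [Set.disjoint_iff]
    rintro x ⟨h1, h2⟩
    exact absurd h2.1 (not_lt.mpr h1)
  have hlt : gaussianReal 0 1 (Iic z₁) < gaussianReal 0 1 (Iic (2 * z₁)) := by
    rw [hsplit, measure_union hdisj2 measurableSet_Ioc]
    exact ENNReal.lt_add_right (measure_ne_top _ _) hpos.ne'
  have hltR : (1 : ℝ) - δ / 2 < (gaussianReal 0 1 (Iic (2 * z₁))).toReal := by
    rw [← hq]
    exact ENNReal.toReal_lt_toReal (measure_ne_top _ _) (measure_ne_top _ _) |>.mpr hlt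
  rw [key]
  apply ENNReal.ofReal_lt_ofReal_iff hδ.1 |>.mpr
  linarith
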